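/- arXiv:2502.18885 — 5 statements merged into one kernel-verified Lean document; each statement's English description precedes it below -/
import Mathlib

section
/- Soundness of the Since-elimination (induction) rule: if (π,i) ⊨ φ S ψ, and χ holds at every point of the run prefix satisfying Γ ∧ ψ, and χ holds at every point satisfying Γ ∧ φ ∧ Prev(φ S ψ), then—assuming Γ holds at (π,i)—(π,i) ⊨ χ. It suffices to prove: for all i, if (π,i) ⊨ φ S ψ then ((π,i) ⊨ ψ → (π,i) ⊨ χ) and ((π,i) ⊨ φ ∧ Prev(φ S ψ) → (π,i) ⊨ χ) together imply (π,i) ⊨ χ. -/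
structure Run (S Tid : Type) where
  state : ℕ → S
  act : ℕ → Tid

def Since {S Tid : Type} (φ ψ : Run S Tid × ℕ → Prop)
    (π : Run S Tid) (i : ℕ) : Prop :=
  ∃ j ≤ i, ψ (π, j) ∧ ∀ k, j < k → k ≤ i → φ (π, k)

/-- `(π,i) ⊨ Prev φ` iff `i > 0` and `(π,i−1) ⊨ φ`. -/
def Prev {S Tid : Type} (φ : Run S Tid × ℕ → Prop)
    (π : Run S Tid) (i : ℕ) : Prop :=
  0 < i ∧ φ (π, i - 1)

/-- soundness of the Since-elimination rule `sinceE`: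
if `Γ ⊨ φ S ψ`, `Γ, ψ ⊨ χ`, and `Γ, φ, Prev(φ S ψ) ⊨ χ`, then `Γ ⊨ χ`;
here instantiated at an arbitrary point `(π,i)` satisfying `Γ`. -/
theorem sinceE_sound {S Tid : Type}
    (Γ : Run S Tid × ℕ → Prop) (φ ψ χ : Run S Tid × ℕ → Prop)
    (h0 : ∀ π i, Γ (π, i) → Since φ ψ π i)
    (h1 : ∀ π i, Γ (π, i) → ψ (π, i) → χ (π, i))
    (h2 : ∀ π i, Γ (π, i) → φ (π, i) → Prev (fun p => Since φ ψ p.1 p.2) π i →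
      χ (π, i))
    (π : Run S Tid) (i : ℕ) (hΓ : Γ (π, i)) : χ (π, i) := by
  obtain ⟨j, hj, hψ, hφ⟩ := h0 π i hΓ
  rcases eq_or_lt_of_le hj with rfl | hlt
  · exact h1 _ _ hΓ hψ
  · refine h2 π i hΓ (hφ i hlt le_rfl) ⟨Nat.lt_of_le_of_lt (Nat.zero_le j) hlt, ?_⟩
    exact ⟨j, Nat.le_sub_one_of_lt hlt, hψ, fun k hk hk' => hφ k hk (hk'.trans (Nat.sub_le i 1))⟩
end

section
/- Stability lifting: for any thread A and state predicate φ, if at point (π,i) the formula Stable_A(φ) holds (every step not performed by A preserves φ) and Last_A(φ) holds (φ held at the state reached by A's most recent step, with no A-step since), then φ holds at (π,i). -/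
/-- `after_A` holds at `(π,k)` iff `k > 0` and the step from `k−1` to `k` was
performed by `A`. -/
def afterA {S Tid : Type} (A : Tid) (π : Run S Tid) (k : ℕ) : Prop :=
  0 < k ∧ π.act (k - 1) = A

/-- `Stable_A(φ)` at `(π,i)`: every step up to `i` not performed by `A`
preserves the state predicate `φ`. -/
def StableA {S Tid : Type} (A : Tid) (φ : S → Prop)
    (π : Run S Tid) (i : ℕ) : Prop :=
  ∀ k, 0 < k → k ≤ i → π.act (k - 1) ≠ A →
    φ (π.state (k - 1)) → φ (π.state k)

/-- `Last_A(P) = ¬after_A S (after_A ∧ P)`: `P` held at the state reached by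
`A`'s most recent step, and no `A`-step occurred since. -/
def LastA {S Tid : Type} (A : Tid) (P : ℕ → Prop)
    (π : Run S Tid) (i : ℕ) : Prop :=
  ∃ j ≤ i, (afterA A π j ∧ P j) ∧ ∀ k, j < k → k ≤ i → ¬ afterA A π k

/-- stability lifting: `Stable_A(φ) ∧ Last_A(φ) ⊨ φ`. -/
theorem stability_lifting {S Tid : Type} (A : Tid) (φ : S → Prop)
    (π : Run S Tid) (i : ℕ)
    (hstable : StableA A φ π i)
    (hlast : LastA A (fun k => φ (π.state k)) π i) :
    φ (π.state i) := by
  obtain ⟨j, hji, ⟨hA, hφj⟩, hno⟩ := hlast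
  have key : ∀ m, j + m ≤ i → φ (π.state (j + m)) := by
    intro m
    induction m with
    | zero => intro _; exact hφj
    | succ n ih =>
      intro h
      have hle : j + n ≤ i := by omega
      have hpos : 0 < j + n + 1 := by omega
      have hne : π.act (j + n + 1 - 1) ≠ A := by
        intro hact
        exact hno (j + n + 1) (by omega) (by omega) ⟨hpos, hact⟩
      have := hstable (j + n + 1) hpos (by omega) hne
      simp only [Nat.add_sub_cancel] at this
      exact this (ih hle)
  have := key (i - j) (by omega)
  rwa [Nat.add_sub_cancel' hji] at this
end

section
/- Knowledge persistence between A-steps: for any thread A and formula φ, if (π,i) ⊨ Last_A(K_A φ) (A knew φ at its most recent step and has taken no step since), then (π,i) ⊨ K_A φ. -/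
def Hist {S Tid O : Type} [DecidableEq Tid] (obs : Tid → S → O) (A : Tid)
    (π : Run S Tid) (i : ℕ) : List O :=
  obs A (π.state 0) ::
    ((((List.range i).filter (fun k => decide (π.act k = A))).map
        (fun k => obs A (π.state (k + 1))))
      ++ [obs A (π.state i)])

def indist {S Tid O : Type} [DecidableEq Tid] (obs : Tid → S → O) (A : Tid)
    (p q : Run S Tid × ℕ) : Prop :=
  Hist obs A p.1 p.2 = Hist obs A q.1 q.2

def Knows {S Tid O : Type} [DecidableEq Tid] (obs : Tid → S → O) (A : Tid)
    (φ : Run S Tid × ℕ → Prop) (p : Run S Tid × ℕ) : Prop :=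
  ∀ q, indist obs A p q → φ q

lemma hist_stable {S Tid O : Type} [DecidableEq Tid]
    (obs : Tid → S → O) (A : Tid) (π : Run S Tid)
    (hobs : ∀ k, π.act k ≠ A → obs A (π.state (k + 1)) = obs A (π.state k)) :
    ∀ i j, j ≤ i → (∀ m, j ≤ m → m < i → π.act m ≠ A) →
      Hist obs A π i = Hist obs A π j := by
  intro i
  induction i with
  | zero =>
    intro j hj _
    interval_cases j
    rfl
  | succ n ih =>
    intro j hj hno
    rcases Nat.lt_or_ge j (n+1) with h | h
    · have hjn : j ≤ n := Nat.lt_succ_iff.mp h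
      have hact : π.act n ≠ A := hno n hjn (Nat.lt_succ_self n)
      have h1 : Hist obs A π (n+1) = Hist obs A π n := by
        unfold Hist
        rw [List.range_succ, List.filter_append, List.map_append]
        simp [hact, hobs n hact]
      rw [h1]
      exact ih j hjn (fun m hm hm' => hno m hm (Nat.lt_succ_of_lt hm'))
    · have : j = n + 1 := le_antisymm hj h
      rw [this]

/-- knowledge persistence between `A`-steps: given that `A`'s
observation changes only on `A`-steps, if `(π,i) ⊨ Last_A(K_A φ)` then
`(π,i) ⊨ K_A φ`. -/
theorem knowledge_persistence {S Tid O : Type} [DecidableEq Tid]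
    (obs : Tid → S → O) (A : Tid) (φ : Run S Tid × ℕ → Prop)
    (π : Run S Tid) (i : ℕ)
    (hobs : ∀ k, π.act k ≠ A → obs A (π.state (k + 1)) = obs A (π.state k))
    (hlast : LastA A (fun k => Knows obs A φ (π, k)) π i) :
    Knows obs A φ (π, i) := by
  rcases hlast with ⟨j, hji, ⟨_, hK⟩, hno⟩
  have hh : Hist obs A π i = Hist obs A π j := by
    apply hist_stable obs A π hobs i j hji
    intro m hm hm' hmA
    exact hno (m+1) (by omega) (by omega) ⟨Nat.succ_pos m, by simpa using hmA⟩
  intro q hq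
  exact hK q (by simpa [indist, hh] using hq)
end

section
/- Epistemic stability lifting: for any thread A and state predicate φ, if (π,i) ⊨ Stable_A(φ) and (π,i) ⊨ Last_A(K_A φ), then (π,i) ⊨ φ. -/
/-- epistemic stability lifting:
`Stable_A(φ) ∧ Last_A(K_A φ) ⊨ φ` for a state predicate `φ`. -/
theorem epistemic_stability_lifting {S Tid O : Type} [DecidableEq Tid]
    (obs : Tid → S → O) (A : Tid) (φ : S → Prop)
    (π : Run S Tid) (i : ℕ)
    (hstable : StableA A φ π i)
    (hlast : LastA A
      (fun k => Knows obs A (fun q => φ (q.1.state q.2)) (π, k)) π i) :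
    φ (π.state i) := by
  obtain ⟨j, hji, ⟨haft, hK⟩, hno⟩ := hlast
  have hφj : φ (π.state j) := hK (π, j) rfl
  have key : ∀ m, j ≤ m → m ≤ i → φ (π.state m) := by
    intro m hm
    induction m, hm using Nat.le_induction with
    | base => intro _; exact hφj
    | succ m hm ih =>
      intro hmi
      have hφm := ih (Nat.le_of_succ_le hmi)
      have hna : π.act m ≠ A := by
        intro hA
        exact hno (m+1) (Nat.lt_succ_of_le hm) hmi ⟨Nat.succ_pos m, by simpa using hA⟩
      simpa using hstable (m+1) (Nat.succ_pos m) hmi (by simpa using hna) (by simpa using hφm)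
  exact key i hji le_rfl
end

section
/- Rely–guarantee parallel composition: suppose for every thread A, the conjunction of the other threads' guarantees entails A's rely (⋀_{B≠A} G_B ⊨ R_A), and for every A, (G_A ∧ R_A) ⊨ Pres_A(I). Then the conjunction of all guarantees entails Pres(I): any point satisfying ⋀_{A} G_A satisfies Pres(I). -/
def PresA {S Tid : Type} (A : Tid) (I : S → Prop)
    (π : Run S Tid) (i : ℕ) : Prop :=
  ∀ k, 0 < k → k ≤ i → π.act (k - 1) = A →
    I (π.state (k - 1)) → I (π.state k)

def Pres {S Tid : Type} (I : S → Prop) (π : Run S Tid) (i : ℕ) : Prop :=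
  ∀ k, 0 < k → k ≤ i → I (π.state (k - 1)) → I (π.state k)

/-- rely–guarantee parallel composition: if for every thread
`A` the conjunction of the other threads' guarantees entails `A`'s rely, and
for every `A`, `G_A ∧ R_A ⊨ Pres_A(I)`, then the conjunction of all
guarantees entails `Pres(I)`. -/
theorem rg_parallel_composition {S Tid : Type} [Fintype Tid] (I : S → Prop)
    (G R : Tid → Run S Tid × ℕ → Prop)
    (hcompat : ∀ (A : Tid) (p : Run S Tid × ℕ),
      (∀ B : Tid, B ≠ A → G B p) → R A p)
    (hlocal : ∀ (A : Tid) (π : Run S Tid) (i : ℕ),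
      G A (π, i) → R A (π, i) → PresA A I π i) :
    ∀ (π : Run S Tid) (i : ℕ), (∀ A : Tid, G A (π, i)) → Pres I π i := by
  intro π i hG k hk hki hI
  exact hlocal (π.act (k-1)) π i (hG _) (hcompat _ _ (fun B _ => hG B)) k hk hki rfl hI
end
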